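/- Let T be a rooted tree in which the Rake operation (removing all leaves and isolated vertices) is applied 3d+1 times, followed by log s repetitions of one Compress operation (removing all vertices lying on a path of ≥ ℓ vertices all of degree ≤ 2) and ℓ−1 Rake operations. If T contains a distance-d dominating set S of size s, then all vertices of T are removed by this procedure. -/

import Mathlib

/-- Degree of `v` inside the sub-forest induced on the vertex set `A`. -/
noncomputable def degIn {V : Type*} (T : SimpleGraph V) (A : Set V) (v : V) : ℕ :=
  {w | w ∈ A ∧ T.Adj v w}.ncard

/-- Rake: remove all leaves and isolated vertices of the current forest. -/
noncomputable def rakeStep {V : Type*} (T : SimpleGraph V) (A : Set V) : Set V :=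
  {v | v ∈ A ∧ 2 ≤ degIn T A v}

/-- `v` lies on a path of at least `ℓ` vertices of the current forest, all of
degree at most 2. -/
noncomputable def onLongDeg2Path {V : Type*} (T : SimpleGraph V) (ℓ : ℕ) (A : Set V) (v : V) :
    Prop :=
  ∃ (m : ℕ) (f : Fin m → V), ℓ ≤ m ∧ Function.Injective f ∧ (∀ i, f i ∈ A) ∧
    (∀ (i : ℕ) (h : i + 1 < m),
      T.Adj (f ⟨i, Nat.lt_of_succ_lt h⟩) (f ⟨i + 1, h⟩)) ∧
    (∀ i, degIn T A (f i) ≤ 2) ∧ (∃ i, f i = v)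

/-- Compress (parameter `ℓ`): remove all vertices lying on a path of `≥ ℓ`
vertices all of degree at most 2. -/
noncomputable def compressPathStep {V : Type*} (T : SimpleGraph V) (ℓ : ℕ) (A : Set V) : Set V :=
  {v | v ∈ A ∧ ¬ onLongDeg2Path T ℓ A v}


set_option linter.unusedSectionVars false
set_option maxHeartbeats 1000000

namespace Stmt12Aux

open SimpleGraph

open scoped Classical

variable {V : Type*} [Fintype V] {T : SimpleGraph V}

/-- `u` lies in the subtree of `v` when the tree is rooted at `r`. -/
def Below (T : SimpleGraph V) (r v u : V) : Prop :=
  T.dist r u = T.dist r v + T.dist v u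

lemma below_refl (r v : V) : Below T r v v := by simp [Below]

/-- In a tree every path realizes the distance. -/
lemma path_length_eq_dist (hT : T.IsTree) {u v : V} (p : T.Walk u v) (hp : p.IsPath) :
    p.length = T.dist u v := by
  obtain ⟨q, hq, hql⟩ := hT.isConnected.exists_path_of_dist u v
  have h := (hT.existsUnique_path u v).unique hp hq
  rw [h, hql]

lemma dist_add_dist_of_mem_support (hT : T.IsTree) {u x v : V} (p : T.Walk u x)
    (hp : p.IsPath) (hv : v ∈ p.support) :
    T.dist u v + T.dist v x = T.dist u x := by
  have h1 : (p.takeUntil v hv).IsPath := hp.takeUntil hv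
  have h2 : (p.dropUntil v hv).IsPath := hp.dropUntil hv
  have h3 := congrArg SimpleGraph.Walk.length (p.take_spec hv)
  rw [SimpleGraph.Walk.length_append] at h3
  rw [← path_length_eq_dist hT _ hp, ← path_length_eq_dist hT _ h1,
    ← path_length_eq_dist hT _ h2, h3]

lemma mem_support_of_below (hT : T.IsTree) {r v u : V} (h : Below T r v u)
    (p : T.Walk r u) (hp : p.IsPath) : v ∈ p.support := by
  obtain ⟨p1, hp1, hl1⟩ := hT.isConnected.exists_path_of_dist r v
  obtain ⟨p2, hp2, hl2⟩ := hT.isConnected.exists_path_of_dist v u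
  have hlen : (p1.append p2).length = T.dist r u := by
    rw [SimpleGraph.Walk.length_append, hl1, hl2, h]
  have hpath := SimpleGraph.Walk.isPath_of_length_eq_dist _ hlen
  have he := (hT.existsUnique_path r u).unique hp hpath
  rw [he, SimpleGraph.Walk.mem_support_append_iff]
  exact Or.inl p1.end_mem_support

/-- Separation: if `u` is in the subtree of `v` and `x` is not, then `v` lies on the
path from `u` to `x`. -/
lemma dist_eq_of_below_of_not_below (hT : T.IsTree) {r v u x : V}
    (hu : Below T r v u) (hx : ¬ Below T r v x) :
    T.dist u x = T.dist u v + T.dist v x := by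
  obtain ⟨p, hp, _⟩ := hT.isConnected.exists_path_of_dist u x
  by_cases hv : v ∈ p.support
  · exact (dist_add_dist_of_mem_support hT p hp hv).symm
  · exfalso
    apply hx
    obtain ⟨p1, hp1, _⟩ := hT.isConnected.exists_path_of_dist r x
    obtain ⟨q, hq, _⟩ := hT.isConnected.exists_path_of_dist r u
    -- the unique path from r to u is contained in (path r x) ++ (path x u)
    have hW : ((p1.append p.reverse).bypass).IsPath := SimpleGraph.Walk.bypass_isPath _
    have he := (hT.existsUnique_path r u).unique hq hW
    have hvq : v ∈ q.support := mem_support_of_below hT hu q hq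
    rw [he] at hvq
    have hvW := SimpleGraph.Walk.support_bypass_subset _ hvq
    rw [SimpleGraph.Walk.mem_support_append_iff] at hvW
    rcases hvW with h1 | h2
    · exact (dist_add_dist_of_mem_support hT p1 hp1 h1).symm
    · exfalso
      rw [SimpleGraph.Walk.support_reverse, List.mem_reverse] at h2
      exact hv h2

/-- A neighbour of `v` is either a child or a parent (w.r.t. the root `r`). -/
lemma adj_dist_cases (hT : T.IsTree) (r : V) {v w : V} (hadj : T.Adj v w) :
    T.dist r w = T.dist r v + 1 ∨ T.dist r v = T.dist r w + 1 := by
  obtain ⟨p, hp, hl⟩ := hT.isConnected.exists_path_of_dist r v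
  by_cases hw : w ∈ p.support
  · right
    have h1 := dist_add_dist_of_mem_support hT p hp hw
    have h2 : T.dist w v = 1 := SimpleGraph.dist_eq_one_iff_adj.2 hadj.symm
    omega
  · left
    have hq : (p.concat hadj).IsPath := by
      rw [SimpleGraph.Walk.isPath_def, SimpleGraph.Walk.support_concat,
        List.nodup_append']
      refine ⟨hp.support_nodup, List.nodup_singleton _, ?_⟩
      intro a ha hb
      rw [List.mem_singleton] at hb
      subst hb; exact hw ha
    have := path_length_eq_dist hT _ hq
    rw [SimpleGraph.Walk.length_concat, hl] at this
    omega

/-- Uniqueness of the parent. -/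
lemma parent_unique (hT : T.IsTree) {r v a b : V} (ha : T.Adj v a) (hb : T.Adj v b)
    (hda : T.dist r v = T.dist r a + 1) (hdb : T.dist r v = T.dist r b + 1) : a = b := by
  obtain ⟨pa, hpa, hla⟩ := hT.isConnected.exists_path_of_dist r a
  obtain ⟨pb, hpb, hlb⟩ := hT.isConnected.exists_path_of_dist r b
  have hqa : (pa.concat ha.symm).IsPath := by
    apply SimpleGraph.Walk.isPath_of_length_eq_dist
    rw [SimpleGraph.Walk.length_concat, hla]; omega
  have hqb : (pb.concat hb.symm).IsPath := by
    apply SimpleGraph.Walk.isPath_of_length_eq_dist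
    rw [SimpleGraph.Walk.length_concat, hlb]; omega
  have he := (hT.existsUnique_path r v).unique hqa hqb
  have := congrArg (fun q : T.Walk r v => q.reverse.getVert 1) he
  simpa [SimpleGraph.Walk.reverse_concat, SimpleGraph.Walk.getVert_cons_succ, SimpleGraph.Walk.getVert_zero] using this

lemma exists_child (hT : T.IsTree) (r : V) {v a b : V} (ha : T.Adj v a) (hb : T.Adj v b)
    (hne : a ≠ b) :
    T.dist r a = T.dist r v + 1 ∨ T.dist r b = T.dist r v + 1 := by
  rcases adj_dist_cases hT r ha with h1 | h1
  · exact Or.inl h1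
  rcases adj_dist_cases hT r hb with h2 | h2
  · exact Or.inr h2
  exact absurd (parent_unique hT ha hb h1 h2) hne

lemma below_of_child (hadj : T.Adj v c) (hd : T.dist r c = T.dist r v + 1) :
    Below T r v c := by
  have : T.dist v c = 1 := SimpleGraph.dist_eq_one_iff_adj.2 hadj
  unfold Below; omega

lemma below_trans (hconn : T.Connected) {r v c u : V} (h1 : Below T r v c)
    (h2 : Below T r c u) : Below T r v u := by
  have t1 := hconn.dist_triangle (u := v) (v := c) (w := u)
  have t2 := hconn.dist_triangle (u := r) (v := v) (w := u)
  unfold Below at *; omega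


/-- Number of vertices of `S` in the subtree of `v`. -/
noncomputable def sizeS (T : SimpleGraph V) (r : V) (S : Finset V) (v : V) : ℕ :=
  (S.filter (fun u => Below T r v u)).card

lemma sizeS_le_card (r : V) (S : Finset V) (v : V) : sizeS T r S v ≤ S.card :=
  Finset.card_le_card (Finset.filter_subset _ _)

lemma sizeS_mono (hconn : T.Connected) {r v c : V} (h : Below T r v c) (S : Finset V) :
    sizeS T r S c ≤ sizeS T r S v := by
  apply Finset.card_le_card
  intro u hu
  rw [Finset.mem_filter] at hu ⊢
  exact ⟨hu.1, below_trans hconn h hu.2⟩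


/-- Subtrees of distinct children are disjoint; sizes add up. -/
lemma sizeS_add_le (hT : T.IsTree) {r v c1 c2 : V} (S : Finset V)
    (h1 : T.dist r c1 = T.dist r v + 1) (h2 : T.dist r c2 = T.dist r v + 1)
    (hc1 : Below T r v c1) (hc2 : Below T r v c2) (hne : c1 ≠ c2) :
    sizeS T r S c1 + sizeS T r S c2 ≤ sizeS T r S v := by
  classical
  have hconn := hT.isConnected
  have hdisj : Disjoint (S.filter (fun u => Below T r c1 u))
      (S.filter (fun u => Below T r c2 u)) := by
    rw [Finset.disjoint_left]
    intro u hu1 hu2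
    rw [Finset.mem_filter] at hu1 hu2
    have hb1 := hu1.2
    have hb2 := hu2.2
    -- c2 is not below c1
    have hnb : ¬ Below T r c1 c2 := by
      intro hb
      unfold Below at hb
      have : T.dist c1 c2 = 0 := by omega
      exact hne (hconn.dist_eq_zero_iff.mp this)
    have hsep := dist_eq_of_below_of_not_below hT hb1 hnb
    have e1 : T.dist c1 u = T.dist c2 u := by
      unfold Below at hb1 hb2; omega
    have e2 : T.dist u c1 = T.dist c1 u := SimpleGraph.dist_comm ..
    have e3 : T.dist u c2 = T.dist c2 u := SimpleGraph.dist_comm ..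
    have : T.dist c1 c2 = 0 := by omega
    exact hne (hconn.dist_eq_zero_iff.mp this)
  have hsub : (S.filter (fun u => Below T r c1 u)) ∪ (S.filter (fun u => Below T r c2 u))
      ⊆ S.filter (fun u => Below T r v u) := by
    intro u hu
    rw [Finset.mem_union] at hu
    rw [Finset.mem_filter]
    rcases hu with hu | hu
    · rw [Finset.mem_filter] at hu
      refine ⟨hu.1, ?_⟩
      have t1 := hconn.dist_triangle (u := v) (v := c1) (w := u)
      have t2 := hconn.dist_triangle (u := r) (v := v) (w := u)
      have := hu.2
      unfold Below at *; omega
    · rw [Finset.mem_filter] at hu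
      refine ⟨hu.1, ?_⟩
      have t1 := hconn.dist_triangle (u := v) (v := c2) (w := u)
      have t2 := hconn.dist_triangle (u := r) (v := v) (w := u)
      have := hu.2
      unfold Below at *; omega
  calc sizeS T r S c1 + sizeS T r S c2
      = ((S.filter (fun u => Below T r c1 u)) ∪ (S.filter (fun u => Below T r c2 u))).card := by
        rw [Finset.card_union_of_disjoint hdisj]; rfl
    _ ≤ _ := Finset.card_le_card hsub

/-- On a geodesic from `v` to `u` there is a vertex at every distance `i ≤ dist v u`. -/
lemma exists_on_geodesic (hconn : T.Connected) (v u : V) :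
    ∀ i, i ≤ T.dist v u → ∃ m, T.dist v m = i ∧ i + T.dist m u = T.dist v u := by
  intro i
  induction i with
  | zero => intro _; exact ⟨v, SimpleGraph.dist_self, by simp⟩
  | succ n ih =>
    intro hn
    obtain ⟨m, hm1, hm2⟩ := ih (by omega)
    have hmu : 1 ≤ T.dist m u := by omega
    obtain ⟨w, hw⟩ := hconn.exists_walk_length_eq_dist m u
    cases w with
    | nil => simp at hw; omega
    | @cons _ m' _ h q =>
      have hq : q.length + 1 = T.dist m u := by
        simpa [Nat.add_comm] using hw
      have e1 : T.dist m' u ≤ q.length := SimpleGraph.dist_le q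
      have e2 : T.dist m m' = 1 := SimpleGraph.dist_eq_one_iff_adj.2 h
      have t3 := hconn.dist_triangle (u := m) (v := m') (w := u)
      have hm'u : T.dist m' u + 1 = T.dist m u := by omega
      have t1 := hconn.dist_triangle (u := v) (v := m) (w := m')
      have t2 := hconn.dist_triangle (u := v) (v := m') (w := u)
      exact ⟨m', by omega, by omega⟩


lemma exists_two_neighbors {A : Set V} {v : V} (h : 2 ≤ degIn T A v) :
    ∃ a b, (a ∈ A ∧ T.Adj v a) ∧ (b ∈ A ∧ T.Adj v b) ∧ a ≠ b := by
  have h1 : 1 < {w | w ∈ A ∧ T.Adj v w}.ncard := h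
  obtain ⟨a, b, ha, hb, hne⟩ := (Set.one_lt_ncard_iff (Set.toFinite _)).1 h1
  exact ⟨a, b, ha, hb, hne⟩

lemma exists_three_neighbors {A : Set V} {v : V} (h : 2 < degIn T A v) :
    ∃ a b c, (a ∈ A ∧ T.Adj v a) ∧ (b ∈ A ∧ T.Adj v b) ∧ (c ∈ A ∧ T.Adj v c) ∧
      a ≠ b ∧ a ≠ c ∧ b ≠ c := by
  obtain ⟨a, b, c, ha, hb, hc, h1, h2, h3⟩ :=
    (Set.two_lt_ncard_iff (Set.toFinite _)).1 h
  exact ⟨a, b, c, ha, hb, hc, h1, h2, h3⟩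

lemma rakeStep_subset (A : Set V) : rakeStep T A ⊆ A := fun _ hv => hv.1

lemma iterate_rake_subset : ∀ (k : ℕ) (A : Set V), (rakeStep T)^[k] A ⊆ A := by
  intro k
  induction k with
  | zero => intro A; simp
  | succ n ih =>
    intro A
    rw [Function.iterate_succ_apply']
    exact (rakeStep_subset _).trans (ih A)

lemma compress_subset (ℓ : ℕ) (A : Set V) : compressPathStep T ℓ A ⊆ A := fun _ hv => hv.1

/-- If `v` survives `k` rakes, there is a descending chain of `k+1` vertices starting
at `v`, all surviving in `C`, with strictly increasing depth and decreasing size. -/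
lemma chain_exists (hT : T.IsTree) (r : V) (S : Finset V) (C : Set V) :
    ∀ (k : ℕ) (v : V), v ∈ (rakeStep T)^[k] C →
      ∃ q : ℕ → V, q 0 = v ∧ (∀ j, j < k → T.Adj (q j) (q (j + 1))) ∧
        ∀ j, j ≤ k → q j ∈ C ∧ sizeS T r S (q j) ≤ sizeS T r S v ∧
          T.dist r (q j) = T.dist r v + j := by
  have hconn := hT.isConnected
  intro k
  induction k with
  | zero =>
    intro v hv
    refine ⟨fun _ => v, rfl, by omega, ?_⟩
    intro j hj
    interval_cases j
    exact ⟨hv, le_refl _, by simp⟩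
  | succ n ih =>
    intro v hv
    rw [Function.iterate_succ_apply'] at hv
    obtain ⟨hv1, hdeg⟩ := hv
    obtain ⟨a, b, ⟨haA, haadj⟩, ⟨hbA, hbadj⟩, hne⟩ := exists_two_neighbors hdeg
    have main : ∀ c, c ∈ (rakeStep T)^[n] C → T.Adj v c →
        T.dist r c = T.dist r v + 1 →
        ∃ q : ℕ → V, q 0 = v ∧ (∀ j, j < n + 1 → T.Adj (q j) (q (j + 1))) ∧
          ∀ j, j ≤ n + 1 → q j ∈ C ∧ sizeS T r S (q j) ≤ sizeS T r S v ∧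
            T.dist r (q j) = T.dist r v + j := by
      intro c hcmem hcadj hcd
      obtain ⟨qc, hq0, hqadj, hqmem⟩ := ih c hcmem
      have hbelow : Below T r v c := below_of_child hcadj hcd
      have hsz : sizeS T r S c ≤ sizeS T r S v := sizeS_mono hconn hbelow S
      refine ⟨fun j => if j = 0 then v else qc (j - 1), by simp, ?_, ?_⟩
      · intro j hj
        rcases Nat.eq_zero_or_pos j with rfl | hjpos
        · simpa [hq0] using hcadj
        · have h1 : j ≠ 0 := by omega
          have h2 : j + 1 ≠ 0 := by omega
          simp only [h1, h2, if_false]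
          have : j - 1 + 1 = j + 1 - 1 := by omega
          rw [this] at *
          have := hqadj (j - 1) (by omega)
          convert this using 2
          omega
      · intro j hj
        rcases Nat.eq_zero_or_pos j with rfl | hjpos
        · refine ⟨iterate_rake_subset n C hv1, le_refl _, by simp⟩
        · have h1 : j ≠ 0 := by omega
          simp only [h1, if_false]
          obtain ⟨m1, m2, m3⟩ := hqmem (j - 1) (by omega)
          refine ⟨m1, le_trans m2 hsz, ?_⟩
          rw [m3, hcd]
          omega
    rcases exists_child hT r haadj hbadj hne with hch | hch
    · exact main a haA haadj hch
    · exact main b hbA hbadj hch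

/-- A vertex of small size has degree at most 2 in `A`, provided all vertices
of `A` have size at least `2^i + 1`. -/
lemma degIn_le_two (hT : T.IsTree) (r : V) (S : Finset V) {A : Set V} {i : ℕ}
    (hA : ∀ x ∈ A, 2 ^ i + 1 ≤ sizeS T r S x) {v : V} (hv : v ∈ A)
    (hsv : sizeS T r S v ≤ 2 ^ (i + 1)) : degIn T A v ≤ 2 := by
  by_contra hd
  push_neg at hd
  obtain ⟨a, b, c, ⟨haA, haadj⟩, ⟨hbA, hbadj⟩, ⟨hcA, hcadj⟩, hab, hac, hbc⟩ :=
    exists_three_neighbors hd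
  have key : ∀ x y, x ∈ A → y ∈ A → T.Adj v x → T.Adj v y → x ≠ y →
      T.dist r x = T.dist r v + 1 → T.dist r y = T.dist r v + 1 → False := by
    intro x y hxA hyA hxadj hyadj hxy hdx hdy
    have hbx : Below T r v x := below_of_child hxadj hdx
    have hby : Below T r v y := below_of_child hyadj hdy
    have hadd := sizeS_add_le hT S hdx hdy hbx hby hxy
    have h1 := hA x hxA
    have h2 := hA y hyA
    have hpow : 2 ^ (i + 1) = 2 ^ i + 2 ^ i := by rw [pow_succ]; omega
    omega
  -- find two children among a, b, c
  rcases adj_dist_cases hT r haadj with ha' | ha' <;>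
    rcases adj_dist_cases hT r hbadj with hb' | hb' <;>
      rcases adj_dist_cases hT r hcadj with hc' | hc'
  · exact key a b haA hbA haadj hbadj hab ha' hb'
  · exact key a b haA hbA haadj hbadj hab ha' hb'
  · exact key a c haA hcA haadj hcadj hac ha' hc'
  · exact absurd (parent_unique hT hbadj hcadj hb' hc') hbc
  · exact key b c hbA hcA hbadj hcadj hbc hb' hc'
  · exact absurd (parent_unique hT haadj hcadj ha' hc') hac
  · exact absurd (parent_unique hT haadj hbadj ha' hb') hab
  · exact absurd (parent_unique hT haadj hbadj ha' hb') hab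


/-- If the subtree of `v` contains at most one vertex of the dominating set,
then it has height at most `3d`. -/
lemma height_le (hT : T.IsTree) (r : V) {S : Finset V} {d : ℕ}
    (hdom : ∀ x : V, ∃ u ∈ S, T.dist x u ≤ d) {v u : V}
    (hb : Below T r v u) (hs : sizeS T r S v ≤ 1) : T.dist v u ≤ 3 * d := by
  have hconn := hT.isConnected
  by_contra hcon
  push_neg at hcon
  set D := T.dist v u with hD
  obtain ⟨m1, hm1v, hm1u⟩ := exists_on_geodesic hconn v u d (by omega)
  obtain ⟨m2, hm2v, hm2u⟩ := exists_on_geodesic hconn v u (3 * d + 1) (by omega)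
  -- both m1 and m2 are below v
  have hbm1 : Below T r v m1 := by
    have t1 := hconn.dist_triangle (u := r) (v := v) (w := m1)
    have t2 := hconn.dist_triangle (u := r) (v := m1) (w := u)
    unfold Below at *; omega
  have hbm2 : Below T r v m2 := by
    have t1 := hconn.dist_triangle (u := r) (v := v) (w := m2)
    have t2 := hconn.dist_triangle (u := r) (v := m2) (w := u)
    unfold Below at *; omega
  -- dominators of m1 and m2 are below v
  have dom_below : ∀ m, Below T r v m → d ≤ T.dist v m →
      ∃ w ∈ S, Below T r v w ∧ T.dist m w ≤ d := by
    intro m hbm hdm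
    obtain ⟨w, hwS, hwd⟩ := hdom m
    refine ⟨w, hwS, ?_, hwd⟩
    by_contra hnb
    have hsep := dist_eq_of_below_of_not_below hT hbm hnb
    have hne : v ≠ w := by
      intro h; subst h
      exact hnb (by simp [Below])
    have hpos : 0 < T.dist v w := hconn.pos_dist_of_ne hne
    have hc : T.dist m v = T.dist v m := SimpleGraph.dist_comm ..
    omega
  obtain ⟨w1, hw1S, hw1b, hw1d⟩ := dom_below m1 hbm1 (by omega)
  obtain ⟨w2, hw2S, hw2b, hw2d⟩ := dom_below m2 hbm2 (by omega)
  -- the two dominators coincide since size ≤ 1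
  have hw : w1 = w2 := by
    by_contra hne
    have : 1 < (S.filter (fun u => Below T r v u)).card := by
      rw [Finset.one_lt_card]
      exact ⟨w1, Finset.mem_filter.2 ⟨hw1S, hw1b⟩, w2, Finset.mem_filter.2 ⟨hw2S, hw2b⟩, hne⟩
    have : 1 < sizeS T r S v := this
    omega
  subst hw
  -- contradiction: dist m1 m2 is both ≥ 2d+1 and ≤ 2d
  have t1 := hconn.dist_triangle (u := v) (v := m1) (w := m2)
  have t2 := hconn.dist_triangle (u := m1) (v := w1) (w := m2)
  have hc1 : T.dist w1 m2 = T.dist m2 w1 := SimpleGraph.dist_comm ..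
  omega

/-- Vertices surviving the initial `3d+1` rakes have size at least 2. -/
lemma base_case (hT : T.IsTree) (r : V) {S : Finset V} {d : ℕ}
    (hdom : ∀ x : V, ∃ u ∈ S, T.dist x u ≤ d) {v : V}
    (hv : v ∈ (rakeStep T)^[3 * d + 1] Set.univ) : 2 ≤ sizeS T r S v := by
  have hconn := hT.isConnected
  by_contra hcon
  push_neg at hcon
  obtain ⟨q, hq0, hqadj, hqmem⟩ := chain_exists hT r S Set.univ (3 * d + 1) v hv
  set k := 3 * d + 1 with hk
  have hdepth : T.dist r (q k) = T.dist r v + k := (hqmem k (le_refl _)).2.2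
  -- dist v u ≤ k by the chain, hence Below and dist v u = k
  have hdist : ∀ j, j ≤ k → T.dist v (q j) ≤ j := by
    intro j
    induction j with
    | zero => intro _; simp [hq0]
    | succ n ih =>
      intro hn
      have t1 := hconn.dist_triangle (u := v) (v := q n) (w := q (n + 1))
      have e := SimpleGraph.dist_eq_one_iff_adj.2 (hqadj n (by omega))
      have := ih (by omega)
      omega
  have t1 := hconn.dist_triangle (u := r) (v := v) (w := q k)
  have hdk := hdist k (le_refl _)
  have hvu : T.dist v (q k) = k := by omega
  have hbu : Below T r v (q k) := by unfold Below; omega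
  have hle := height_le hT r hdom hbu (by omega)
  omega

/-- The compress-then-rake round doubles the size lower bound. -/
lemma step_case (hT : T.IsTree) (r : V) (S : Finset V) {i ℓ : ℕ} (hℓ : 2 ≤ ℓ)
    {Ai : Set V} (hA : ∀ x ∈ Ai, 2 ^ i + 1 ≤ sizeS T r S x) {v : V}
    (hv : v ∈ (rakeStep T)^[ℓ - 1] (compressPathStep T ℓ Ai)) :
    2 ^ (i + 1) + 1 ≤ sizeS T r S v := by
  have hconn := hT.isConnected
  by_contra hcon
  push_neg at hcon
  have hsv : sizeS T r S v ≤ 2 ^ (i + 1) := by omega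
  obtain ⟨q, hq0, hqadj, hqmem⟩ := chain_exists hT r S (compressPathStep T ℓ Ai) (ℓ - 1) v hv
  have hvC : v ∈ compressPathStep T ℓ Ai := iterate_rake_subset _ _ hv
  apply hvC.2
  refine ⟨ℓ, fun j => q (j : ℕ), le_refl _, ?_, ?_, ?_, ?_, ?_⟩
  · -- injective
    intro j1 j2 hj
    have d1 := (hqmem j1 (by omega)).2.2
    have d2 := (hqmem j2 (by omega)).2.2
    have hj' : q (j1 : ℕ) = q (j2 : ℕ) := hj
    rw [hj'] at d1
    have : (j1 : ℕ) = (j2 : ℕ) := by omega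
    exact Fin.ext this
  · -- membership in Ai
    intro j
    exact compress_subset ℓ Ai (hqmem j (by omega)).1
  · -- adjacency
    intro j hj
    exact hqadj j (by omega)
  · -- degree at most two
    intro j
    have hm := hqmem j (by omega)
    exact degIn_le_two hT r S hA (compress_subset ℓ Ai hm.1) (le_trans hm.2.1 hsv)
  · exact ⟨⟨0, by omega⟩, hq0⟩


end Stmt12Aux

/-- If a tree `T` has a distance-`d` dominating set of size `s`, then `3d+1`
Rakes followed by `log s` repetitions of (one Compress and `ℓ-1` Rakes) remove
all vertices of `T`. -/
theorem stmt12 {V : Type*} [Fintype V] (T : SimpleGraph V) (hT : T.IsTree)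
    (d s ℓ : ℕ) (hℓ : 2 ≤ ℓ) (hs : 1 ≤ s)
    (S : Finset V) (hScard : S.card = s)
    (hdom : ∀ v : V, ∃ u ∈ S, T.dist v u ≤ d) :
    (fun A => (rakeStep T)^[ℓ - 1] (compressPathStep T ℓ A))^[Nat.clog 2 s]
      ((rakeStep T)^[3 * d + 1] Set.univ) = ∅ := by
  classical
  have hconn := hT.isConnected
  obtain ⟨r⟩ := hconn.nonempty
  have key : ∀ i, ∀ v, v ∈ (fun A => (rakeStep T)^[ℓ - 1] (compressPathStep T ℓ A))^[i]
      ((rakeStep T)^[3 * d + 1] Set.univ) → 2 ^ i + 1 ≤ Stmt12Aux.sizeS T r S v := by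
    intro i
    induction i with
    | zero =>
      intro v hv
      simpa using Stmt12Aux.base_case hT r hdom (by simpa using hv)
    | succ i ih =>
      intro v hv
      rw [Function.iterate_succ_apply'] at hv
      exact Stmt12Aux.step_case hT r S hℓ ih hv
  ext v
  simp only [Set.mem_empty_iff_false, iff_false]
  intro hv
  have h1 := key (Nat.clog 2 s) v hv
  have h2 : Stmt12Aux.sizeS T r S v ≤ s := hScard ▸ Stmt12Aux.sizeS_le_card r S v
  have h3 : s ≤ 2 ^ Nat.clog 2 s := Nat.le_pow_clog (by norm_num) s
  omega
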